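/- Let n ≥ 1, let σ be a permutation of Fin n (label i is placed in locker σ(i), so locker x contains label σ⁻¹(x)), and let i : Fin n. Define the pointer-following sequence a : ℕ → Fin n by a 0 = i and a (j+1) = σ⁻¹ (a j) (the player first opens locker i and then always opens the locker whose number equals the label just revealed). Then for every m ≥ 1, the label i appears among the contents of the first m opened lockers, i.e. σ(i) ∈ {a 0, a 1, …, a (m-1)}, if and only if the length of the cycle of σ containing i is at most m. -/

import Mathlib

/-- The orbit (cycle) of `i` under the permutation `σ` of `Fin n`, as a finset.
For `n ≥ 1` the powers `σ^0, …, σ^(n-1)` applied to `i` exhaust the orbit. -/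
def cycleOf {n : ℕ} (σ : Equiv.Perm (Fin n)) (i : Fin n) : Finset (Fin n) :=
  (Finset.range n).image (fun k => (σ ^ k) i)

lemma cycleOf_card_eq_minimalPeriod {n : ℕ} (hn : 1 ≤ n) (σ : Equiv.Perm (Fin n)) (i : Fin n) :
    (cycleOf σ i).card = Function.minimalPeriod σ i := by
  set d := Function.minimalPeriod σ i with hd
  have hper : i ∈ Function.periodicPts σ :=
    ⟨orderOf σ, orderOf_pos σ, by
      simp [Function.IsPeriodicPt, Function.IsFixedPt, Equiv.Perm.iterate_eq_pow, pow_orderOf_eq_one]⟩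
  have hdpos : 0 < d := Function.minimalPeriod_pos_of_mem_periodicPts hper
  have hinj : Set.InjOn (fun k => (σ ^ k) i) (Finset.range d : Set ℕ) := by
    intro x hx y hy hxy
    simp only [Finset.coe_range, Set.mem_Iio] at hx hy
    exact Function.iterate_injOn_Iio_minimalPeriod hx hy hxy
  have hcard : ((Finset.range d).image (fun k => (σ ^ k) i)).card = d := by
    rw [Finset.card_image_of_injOn hinj, Finset.card_range]
  have hdn : d ≤ n := by
    calc d = ((Finset.range d).image (fun k => (σ ^ k) i)).card := hcard.symm
    _ ≤ Fintype.card (Fin n) := Finset.card_le_card (Finset.subset_univ _) |>.trans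
        (by simp)
    _ = n := Fintype.card_fin n
  have heq : cycleOf σ i = (Finset.range d).image (fun k => (σ ^ k) i) := by
    apply Finset.Subset.antisymm
    · intro x hx
      simp only [cycleOf, Finset.mem_image, Finset.mem_range] at hx ⊢
      obtain ⟨k, hk, rfl⟩ := hx
      exact ⟨k % d, Nat.mod_lt _ hdpos, by
        exact Function.iterate_mod_minimalPeriod_eq (f := ⇑σ) (x := i) (n := k)⟩
    · apply Finset.image_subset_image
      exact Finset.range_subset_range.2 hdn
  rw [heq, hcard]

/-- In the locker puzzle with `n` lockers, label `i` is in locker `σ i`, so locker `x`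
contains label `σ⁻¹ x`.  Player `i` uses the pointer-following strategy
`a 0 = i`, `a (j+1) = σ⁻¹ (a j)`.  For every `m ≥ 1`, the label `i` appears among the
contents of the first `m` opened lockers (equivalently `σ i` is among the first `m`
opened lockers) if and only if the cycle of `σ` containing `i` has length at most `m`. -/
theorem locker_pointer_following_win_iff_cycle_le
    (n : ℕ) (hn : 1 ≤ n) (σ : Equiv.Perm (Fin n)) (i : Fin n)
    (a : ℕ → Fin n) (ha0 : a 0 = i) (haS : ∀ j, a (j + 1) = σ.symm (a j))
    (m : ℕ) (hm : 1 ≤ m) :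
    σ i ∈ (Finset.range m).image a ↔ (cycleOf σ i).card ≤ m := by
  set d := Function.minimalPeriod σ i with hd
  have hper : i ∈ Function.periodicPts σ :=
    ⟨orderOf σ, orderOf_pos σ, by
      simp [Function.IsPeriodicPt, Function.IsFixedPt, Equiv.Perm.iterate_eq_pow, pow_orderOf_eq_one]⟩
  have hdpos : 0 < d := Function.minimalPeriod_pos_of_mem_periodicPts hper
  have ha : ∀ j, a j = (σ.symm ^ j) i := by
    intro j
    induction j with
    | zero => simpa using ha0
    | succ k ih => rw [haS k, ih, pow_succ', Equiv.Perm.mul_apply]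
  have key : ∀ j, a j = σ i ↔ d ∣ (j + 1) := by
    intro j
    rw [ha j]
    have hs : σ.symm ^ j = (σ ^ j).symm := by
      rw [← Equiv.Perm.inv_def, ← Equiv.Perm.inv_def, inv_pow]
    have h1 : (σ.symm ^ j) i = σ i ↔ (σ ^ (j + 1)) i = i := by
      rw [hs, Equiv.symm_apply_eq, pow_succ, Equiv.Perm.mul_apply, eq_comm]
    rw [h1, ← Function.isPeriodicPt_iff_minimalPeriod_dvd]
    rfl
  rw [cycleOf_card_eq_minimalPeriod hn σ i, ← hd]
  constructor
  · intro h
    simp only [Finset.mem_image, Finset.mem_range] at h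
    obtain ⟨j, hj, hji⟩ := h
    have hdvd := (key j).1 hji
    exact (Nat.le_of_dvd (Nat.succ_pos j) hdvd).trans hj
  · intro h
    simp only [Finset.mem_image, Finset.mem_range]
    refine ⟨d - 1, by omega, ?_⟩
    rw [key (d - 1)]
    have : d - 1 + 1 = d := by omega
    rw [this]
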